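/- Let (X,d) be a metric space, δ ≥ 0, and let r₁, r₂ : [0,∞) → X be geodesic rays based at p and l : ℝ → X a geodesic line, with m ≥ 0 and t₀ ∈ ℝ, satisfying the following δ-thin ideal triangle conditions: d(r₁(m-j), r₂(m-j)) ≤ δ for all 0 ≤ j ≤ m; d(r₁(m+j), l(t₀-j)) ≤ δ for all j ≥ 0; and d(r₂(m+j), l(t₀+j)) ≤ δ for all j ≥ 0. Let K ≥ 0 and set b = l(t₀ - K) (a point on l on the r₁-side of l(t₀)). Then for every s ≥ 0, d(r₂(s), b) ≥ K - 2δ. -/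
import Mathlib


/-- Let `r₁, r₂` be geodesic rays at `p`, `l` a geodesic line, with
the δ-thin ideal triangle conditions for internal points `r₁(m), r₂(m), l(t₀)`:
`d(r₁(m-j), r₂(m-j)) ≤ δ` for `0 ≤ j ≤ m`, `d(r₁(m+j), l(t₀-j)) ≤ δ` and
`d(r₂(m+j), l(t₀+j)) ≤ δ` for `j ≥ 0`. If `b = l(t₀ - K)` with `K ≥ 0`, then every
point of the ray `r₂` is at distance at least `K - 2δ` from `b`. -/
theorem stmt14 {X : Type*} [MetricSpace X] (δ : ℝ) (hδ : 0 ≤ δ) (p : X)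
    (r₁ r₂ l : ℝ → X) (hr₁0 : r₁ 0 = p) (hr₂0 : r₂ 0 = p)
    (hr₁ : ∀ s t : ℝ, 0 ≤ s → 0 ≤ t → dist (r₁ s) (r₁ t) = |s - t|)
    (hr₂ : ∀ s t : ℝ, 0 ≤ s → 0 ≤ t → dist (r₂ s) (r₂ t) = |s - t|)
    (hl : ∀ s t : ℝ, dist (l s) (l t) = |s - t|)
    (m t₀ : ℝ) (hm : 0 ≤ m)
    (h1 : ∀ j : ℝ, 0 ≤ j → j ≤ m → dist (r₁ (m - j)) (r₂ (m - j)) ≤ δ)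
    (h2 : ∀ j : ℝ, 0 ≤ j → dist (r₁ (m + j)) (l (t₀ - j)) ≤ δ)
    (h3 : ∀ j : ℝ, 0 ≤ j → dist (r₂ (m + j)) (l (t₀ + j)) ≤ δ)
    (K : ℝ) (hK : 0 ≤ K) :
    ∀ s : ℝ, 0 ≤ s → K - 2 * δ ≤ dist (r₂ s) (l (t₀ - K)) := by
  intro s hs
  rcases le_total s m with h | h
  · have hA := h1 (m - s) (by linarith) (by linarith)
    rw [show m - (m - s) = s by ring] at hA
    have hB := h2 K hK
    have hC := hr₁ s (m + K) hs (by linarith)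
    rw [abs_of_nonpos (by linarith)] at hC
    have hD := dist_triangle (r₁ s) (l (t₀ - K)) (r₁ (m + K))
    have hE := dist_triangle (r₁ s) (r₂ s) (l (t₀ - K))
    have h1' := dist_comm (r₁ s) (r₂ s)
    have h2' := dist_comm (l (t₀ - K)) (r₁ (m + K))
    linarith
  · have hA := h3 (s - m) (by linarith)
    rw [show m + (s - m) = s by ring] at hA
    have hB := hl (t₀ + (s - m)) (t₀ - K)
    rw [show t₀ + (s - m) - (t₀ - K) = s - m + K by ring,
      abs_of_nonneg (by linarith)] at hB
    have hD := dist_triangle (l (t₀ + (s - m))) (r₂ s) (l (t₀ - K))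
    have h1' := dist_comm (l (t₀ + (s - m))) (r₂ s)
    linarith
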